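/- The generating function for all partitions is the constant term in z of the double product: Σ_λ q^{|λ|} = [z^0] (−zq; q)_∞ (−1/z; q)_∞, where the sum is over all partitions λ. -/

import Mathlib

open Filter

/-- A partition represented as a weakly decreasing, eventually zero sequence of parts
(0-indexed: `f i` is the (i+1)-st part). -/
def IsPartition (f : ℕ → ℕ) : Prop :=
  Antitone f ∧ ∀ᶠ i in atTop, f i = 0

/-- The size `|λ|` of a partition. -/
noncomputable def psize (f : ℕ → ℕ) : ℕ := ∑' i, f i

/-- The conjugate partition: `conj f j` is the number of parts of `f` exceeding `j`,
i.e. the (j+1)-st column length. -/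
noncomputable def conj (f : ℕ → ℕ) : ℕ → ℕ := fun j => Nat.card {i : ℕ // j < f i}

/-- The Durfee square size: the number of indices `i` with `λ_{i+1} ≥ i+1`. -/
noncomputable def durfee (f : ℕ → ℕ) : ℕ := Nat.card {i : ℕ // i < f i}

/-- Top Frobenius entry `a_{i+1} = λ_{i+1} - (i+1)` (0-indexed). -/
noncomputable def frobA (f : ℕ → ℕ) (i : ℕ) : ℕ := f i - (i + 1)

/-- Bottom Frobenius entry `b_{i+1} = λ'_{i+1} - (i+1)` (0-indexed). -/
noncomputable def frobB (f : ℕ → ℕ) (i : ℕ) : ℕ := conj f i - (i + 1)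

/-- Hook length of the (0-indexed) box `(i,j)` (valid when `j < f i`):
`h = (λ_i - j) + (λ'_j - i) - 1` in 1-indexed terms, which equals
`(λ_i - i) + (λ'_j - j) + 1`. -/
noncomputable def hook (f : ℕ → ℕ) (i j : ℕ) : ℕ :=
  (f i - (j + 1)) + (conj f j - (i + 1)) + 1

/-- A `t`-core partition: no hook length divisible by `t`. -/
def IsTCore (t : ℕ) (f : ℕ → ℕ) : Prop :=
  IsPartition f ∧ ∀ i j, j < f i → ¬ t ∣ hook f i j

section aux
open Finset


section prodtools
variable {ι : Type*} [DecidableEq ι] {a : ι → ℂ}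

lemma summable_norm_prod_finset (h : Summable fun i => ‖a i‖) :
    Summable (fun S : Finset ι => ∏ k ∈ S, ‖a k‖) := by
  apply summable_of_sum_le (c := Real.exp (∑' i, ‖a i‖)) (fun S => by positivity)
  intro u
  calc ∑ S ∈ u, ∏ k ∈ S, ‖a k‖
      ≤ ∑ S ∈ (u.sup id).powerset, ∏ k ∈ S, ‖a k‖ :=
        sum_le_sum_of_subset_of_nonneg
          (fun S hS => mem_powerset.2 (le_sup (f := id) hS)) (by intros; positivity)
    _ = ∏ k ∈ u.sup id, (‖a k‖ + 1) := by
        rw [Finset.prod_add]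
        exact Finset.sum_congr rfl fun S _ => by rw [Finset.prod_const_one, mul_one]
    _ ≤ ∏ k ∈ u.sup id, Real.exp ‖a k‖ :=
        Finset.prod_le_prod (fun k _ => by positivity)
          (fun k _ => by linarith [Real.add_one_le_exp ‖a k‖])
    _ = Real.exp (∑ k ∈ u.sup id, ‖a k‖) := by rw [Real.exp_sum]
    _ ≤ Real.exp (∑' i, ‖a i‖) := Real.exp_le_exp.2 (Summable.sum_le_tsum _ (fun k _ => norm_nonneg _) h)

lemma summable_norm_prod_finset' (h : Summable fun i => ‖a i‖) :
    Summable (fun S : Finset ι => ‖∏ k ∈ S, a k‖) := by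
  refine (summable_norm_prod_finset h).congr fun S => ?_
  rw [norm_prod]

lemma summable_prod_finset (h : Summable fun i => ‖a i‖) :
    Summable (fun S : Finset ι => ∏ k ∈ S, a k) :=
  Summable.of_norm (summable_norm_prod_finset' h)

lemma hasProd_one_add (h : Summable fun i => ‖a i‖) :
    HasProd (fun k => 1 + a k) (∑' S : Finset ι, ∏ k ∈ S, a k) := by
  have hs := (summable_prod_finset h).hasSum
  have hmap : Tendsto (fun F : Finset ι => F.powerset) atTop atTop := by
    apply tendsto_atTop_atTop.mpr
    intro G
    refine ⟨G.sup id, fun F hF S hS => mem_powerset.2 ?_⟩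
    exact le_trans (le_sup (f := id) hS) hF
  have := hs.comp hmap
  refine Tendsto.congr (fun F => ?_) this
  simp only [Function.comp]
  rw [show (fun k => (1:ℂ) + a k) = fun k => a k + 1 from funext fun k => add_comm _ _]
  rw [Finset.prod_add]
  exact (Finset.sum_congr rfl fun S _ => by rw [Finset.prod_const_one, mul_one]).symm

end prodtools

/-- weight of a pair of finsets -/
def wtP (p : Finset ℕ × Finset ℕ) : ℕ := (∑ k ∈ p.1, (k+1)) + ∑ k ∈ p.2, k

/-- z-exponent of a pair of finsets -/
def mP (p : Finset ℕ × Finset ℕ) : ℤ := (p.1.card : ℤ) - p.2.card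

section analytic
variable {q : ℂ} (hq : ‖q‖ < 1)

lemma summable_geom1 (hq : ‖q‖ < 1) : Summable fun k : ℕ => ‖q ^ (k+1)‖ := by
  have := summable_geometric_of_lt_one (norm_nonneg q) hq
  refine ((this.mul_left ‖q‖).congr fun k => ?_)
  rw [norm_pow, pow_succ, mul_comm]

lemma summable_geom0 (hq : ‖q‖ < 1) : Summable fun k : ℕ => ‖q ^ k‖ := by
  have := summable_geometric_of_lt_one (norm_nonneg q) hq
  exact this.congr fun k => (norm_pow q k).symm

include hq in
lemma integrand_eq (θ : ℝ) :
    (∏' k : ℕ, (1 + Complex.exp (θ * Complex.I) * q ^ (k + 1))) *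
    (∏' k : ℕ, (1 + (Complex.exp (θ * Complex.I))⁻¹ * q ^ k))
    = ∑' p : Finset ℕ × Finset ℕ, Complex.exp ((mP p) * Complex.I * θ) * q ^ wtP p := by
  set z := Complex.exp (θ * Complex.I) with hzdef
  have hz : z ≠ 0 := Complex.exp_ne_zero _
  have hz1 : ‖z‖ = 1 := Complex.norm_exp_ofReal_mul_I θ
  have hzi : ‖z⁻¹‖ = 1 := by rw [norm_inv, hz1]; norm_num
  have h1 : Summable fun k : ℕ => ‖z * q ^ (k+1)‖ := by
    refine (summable_geom1 hq).congr fun k => ?_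
    rw [norm_mul, hz1, one_mul]
  have h2 : Summable fun k : ℕ => ‖z⁻¹ * q ^ k‖ := by
    refine (summable_geom0 hq).congr fun k => ?_
    rw [norm_mul, hzi, one_mul]
  rw [(hasProd_one_add h1).tprod_eq, (hasProd_one_add h2).tprod_eq]
  rw [tsum_mul_tsum_of_summable_norm (summable_norm_prod_finset' h1)
    (summable_norm_prod_finset' h2)]
  refine tsum_congr fun p => ?_
  obtain ⟨S, T⟩ := p
  have e1 : ∏ k ∈ S, (z * q ^ (k+1)) = z ^ S.card * q ^ (∑ k ∈ S, (k+1)) := by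
    rw [Finset.prod_mul_distrib, Finset.prod_const, Finset.prod_pow_eq_pow_sum]
  have e2 : ∏ k ∈ T, (z⁻¹ * q ^ k) = (z⁻¹) ^ T.card * q ^ (∑ k ∈ T, k) := by
    rw [Finset.prod_mul_distrib, Finset.prod_const, Finset.prod_pow_eq_pow_sum]
  have e3 : Complex.exp ((mP (S, T)) * Complex.I * θ) = z ^ S.card * (z⁻¹) ^ T.card := by
    have : ((mP (S, T) : ℂ)) * Complex.I * θ = (mP (S, T) : ℂ) * (θ * Complex.I) := by ring
    rw [this, Complex.exp_int_mul]
    show z ^ (mP (S,T)) = _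
    rw [show mP (S,T) = ((S.card : ℤ) - (T.card : ℤ)) from rfl]
    rw [zpow_sub₀ hz, zpow_natCast, zpow_natCast, div_eq_mul_inv, inv_pow]
  rw [e1, e2, e3]
  simp only [wtP, pow_add]
  ring

end analytic

section integralstep
variable {q : ℂ} (hq : ‖q‖ < 1)
open MeasureTheory intervalIntegral Complex

lemma norm_exp_intmul (m : ℤ) (θ : ℝ) : ‖Complex.exp ((m : ℂ) * Complex.I * θ)‖ = 1 := by
  have : ((m : ℂ)) * Complex.I * θ = (m * θ : ℝ) * Complex.I := by push_cast; ring
  rw [this, Complex.norm_exp_ofReal_mul_I]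

include hq in
lemma summable_q_wt : Summable fun p : Finset ℕ × Finset ℕ => ‖q‖ ^ wtP p := by
  have h1 : Summable fun S : Finset ℕ => ∏ k ∈ S, ‖(q : ℂ) ^ (k+1)‖ :=
    summable_norm_prod_finset (summable_geom1 hq)
  have h2 : Summable fun T : Finset ℕ => ∏ k ∈ T, ‖(q : ℂ) ^ k‖ :=
    summable_norm_prod_finset (summable_geom0 hq)
  have := h1.mul_of_nonneg h2 (fun S => by positivity) (fun T => by positivity)
  refine this.congr fun p => ?_
  simp only [norm_pow]
  rw [Finset.prod_pow_eq_pow_sum, Finset.prod_pow_eq_pow_sum, wtP, pow_add]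

include hq in
lemma integral_step :
    ∫ θ : ℝ in (0:ℝ)..(2*Real.pi),
      (∑' p : Finset ℕ × Finset ℕ, Complex.exp ((mP p) * Complex.I * θ) * q ^ wtP p)
    = ∑' p : Finset ℕ × Finset ℕ,
        (if mP p = 0 then (2*Real.pi : ℝ) * q ^ wtP p else 0) := by
  have h2pi : (0:ℝ) ≤ 2*Real.pi := by positivity
  have hcont : ∀ p : Finset ℕ × Finset ℕ,
      Continuous (fun θ : ℝ => Complex.exp ((mP p) * Complex.I * θ) * q ^ wtP p) := by
    intro p
    exact (Complex.continuous_exp.comp (continuous_const.mul Complex.continuous_ofReal)).mul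
      continuous_const
  have hint : ∀ p : Finset ℕ × Finset ℕ, Integrable
      (fun θ : ℝ => Complex.exp ((mP p) * Complex.I * θ) * q ^ wtP p)
      (volume.restrict (Set.Ioc (0:ℝ) (2*Real.pi))) := by
    intro p
    exact ((hcont p).integrableOn_Ioc)
  have hnorm : ∀ (p : Finset ℕ × Finset ℕ) (θ : ℝ),
      ‖Complex.exp ((mP p) * Complex.I * θ) * q ^ wtP p‖ = ‖q‖ ^ wtP p := by
    intro p θ
    rw [norm_mul, norm_exp_intmul, one_mul, norm_pow]
  have hsum : Summable fun p : Finset ℕ × Finset ℕ =>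
      ∫ θ in Set.Ioc (0:ℝ) (2*Real.pi),
        ‖Complex.exp ((mP p) * Complex.I * θ) * q ^ wtP p‖ := by
    refine ((summable_q_wt hq).mul_left (2*Real.pi)).congr fun p => ?_
    simp only [hnorm]
    rw [setIntegral_const, Real.volume_real_Ioc, smul_eq_mul]
    rw [max_eq_left (by linarith)]
    ring_nf
  rw [intervalIntegral.integral_of_le h2pi]
  rw [← MeasureTheory.integral_tsum_of_summable_integral_norm hint hsum]
  refine tsum_congr fun p => ?_
  rw [← intervalIntegral.integral_of_le h2pi]
  rw [intervalIntegral.integral_mul_const]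
  by_cases hm : mP p = 0
  · simp only [hm, if_true, Int.cast_zero, zero_mul, Complex.exp_zero]
    rw [intervalIntegral.integral_const]
    simp only [sub_zero, one_smul]
    rw [real_smul]
    push_cast
    ring
  · have hc : (mP p : ℂ) * Complex.I ≠ 0 :=
      mul_ne_zero (Int.cast_ne_zero.mpr hm) Complex.I_ne_zero
    rw [integral_exp_mul_complex hc]
    have : (mP p : ℂ) * Complex.I * ((2*Real.pi : ℝ) : ℂ) = (mP p : ℂ) * (2 * Real.pi * Complex.I) := by
      push_cast; ring
    rw [this, Complex.exp_int_mul_two_pi_mul_I]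
    simp [hm]

end integralstep

section assembly
variable {q : ℂ} (hq : ‖q‖ < 1)

include hq in
lemma analytic_side :
    (1 / (2 * (Real.pi : ℂ))) *
        ∫ θ : ℝ in (0 : ℝ)..(2 * Real.pi),
          (∏' k : ℕ, (1 + Complex.exp (θ * Complex.I) * q ^ (k + 1))) *
          (∏' k : ℕ, (1 + (Complex.exp (θ * Complex.I))⁻¹ * q ^ k))
    = ∑' p : {p : Finset ℕ × Finset ℕ // p.1.card = p.2.card}, q ^ wtP (p : Finset ℕ × Finset ℕ) := by
  have hpi : (2 * (Real.pi : ℂ)) ≠ 0 := by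
    simp [Real.pi_ne_zero]
  rw [intervalIntegral.integral_congr (g := fun θ : ℝ =>
      ∑' p : Finset ℕ × Finset ℕ, Complex.exp ((mP p) * Complex.I * θ) * q ^ wtP p)
      (fun θ _ => integrand_eq hq θ)]
  rw [integral_step hq, ← tsum_mul_left]
  have key : ∀ p : Finset ℕ × Finset ℕ,
      1 / (2 * (Real.pi:ℂ)) * (if mP p = 0 then ((2*Real.pi : ℝ) : ℂ) * q ^ wtP p else 0)
      = Set.indicator {p : Finset ℕ × Finset ℕ | p.1.card = p.2.card}
          (fun p => q ^ wtP p) p := by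
    intro p
    rw [Set.indicator_apply]
    have hmm : mP p = 0 ↔ p.1.card = p.2.card := by
      rw [mP, sub_eq_zero, Int.natCast_inj]
    by_cases h : mP p = 0
    · rw [if_pos h, if_pos (show p ∈ {p : Finset ℕ × Finset ℕ | p.1.card = p.2.card} from hmm.mp h)]
      push_cast
      field_simp
    · rw [if_neg h, if_neg (show p ∉ {p : Finset ℕ × Finset ℕ | p.1.card = p.2.card} from
        fun hc => h (hmm.mpr hc)), mul_zero]
  rw [tsum_congr key]
  exact (_root_.tsum_subtype {p : Finset ℕ × Finset ℕ | p.1.card = p.2.card}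
    (fun p => q ^ wtP p)).symm

end assembly

/-! ### Generic counting helpers -/

lemma le_of_forall_lt_imp {m n : ℕ} (h : ∀ i, i < m → i < n) : m ≤ n := by
  by_contra hc
  have := h n (by omega)
  omega

lemma eq_of_lt_iff {m n : ℕ} (h : ∀ i, i < m ↔ i < n) : m = n := by
  have h1 := h m; have h2 := h n; omega

lemma mem_iff_lt_card_of_dc (F : Finset ℕ) (hdc : ∀ x ∈ F, ∀ y, y ≤ x → y ∈ F) (i : ℕ) :
    i ∈ F ↔ i < F.card := by
  constructor
  · intro hi
    have hsub : Finset.Iic i ⊆ F := fun y hy => hdc i hi y (Finset.mem_Iic.1 hy)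
    have := Finset.card_le_card hsub
    rw [Nat.card_Iic] at this
    omega
  · intro hlt
    by_contra h
    have hsub : F ⊆ Finset.range i := by
      intro x hx
      rw [Finset.mem_range]
      by_contra hge
      exact h (hdc x hx i (by omega))
    have := Finset.card_le_card hsub
    rw [Finset.card_range] at this
    omega

lemma mem_iff_lt_ncard (s : Set ℕ) (hs : s.Finite) (hdc : ∀ x ∈ s, ∀ y, y ≤ x → y ∈ s)
    (i : ℕ) : i ∈ s ↔ i < Nat.card s := by
  have hdc' : ∀ x ∈ hs.toFinset, ∀ y, y ≤ x → y ∈ hs.toFinset := by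
    intro x hx y hy
    rw [Set.Finite.mem_toFinset] at *
    exact hdc x hx y hy
  have := mem_iff_lt_card_of_dc hs.toFinset hdc' i
  rw [Set.Finite.mem_toFinset] at this
  rw [this, Nat.card_coe_set_eq, Set.ncard_eq_toFinset_card _ hs]

lemma natcard_lt (d : ℕ) : Nat.card {i : ℕ // i < d} = d := by
  rw [Nat.card_congr (Fin.equivSubtype (n := d)).symm, Nat.card_eq_fintype_card,
    Fintype.card_fin]

/-! ### Basic partition lemmas -/

variable {f : ℕ → ℕ}

lemma IsPartition.exists_bound (hf : IsPartition f) : ∃ N, ∀ i, N ≤ i → f i = 0 :=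
  eventually_atTop.mp hf.2

lemma IsPartition.finite_row (hf : IsPartition f) (j : ℕ) : {i : ℕ | j < f i}.Finite := by
  obtain ⟨N, hN⟩ := hf.exists_bound
  apply Set.Finite.subset (Set.finite_Iio N)
  intro i hi
  simp only [Set.mem_setOf_eq] at hi
  by_contra h
  have := hN i (by simpa [Set.mem_Iio] using h)
  omega

lemma conj_lt_iff (hf : IsPartition f) {i j : ℕ} : i < conj f j ↔ j < f i := by
  have := mem_iff_lt_ncard {i : ℕ | j < f i} (hf.finite_row j)
    (fun x hx y hy => by
      simp only [Set.mem_setOf_eq] at *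
      exact lt_of_lt_of_le hx (hf.1 hy)) i
  exact this.symm

lemma durfee_lt_iff (hf : IsPartition f) {i : ℕ} : i < durfee f ↔ i < f i := by
  have hfin : {i : ℕ | i < f i}.Finite := by
    apply Set.Finite.subset (hf.finite_row 0)
    intro i hi
    simp only [Set.mem_setOf_eq] at *
    omega
  have := mem_iff_lt_ncard {i : ℕ | i < f i} hfin
    (fun x hx y hy => by
      simp only [Set.mem_setOf_eq] at *
      have := hf.1 hy
      omega) i
  exact this.symm

lemma conj_isPartition (hf : IsPartition f) : IsPartition (conj f) := by
  constructor
  · intro j j' hjj'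
    apply le_of_forall_lt_imp
    intro i hi
    rw [conj_lt_iff hf] at *
    omega
  · rw [eventually_atTop]
    refine ⟨f 0, fun j hj => ?_⟩
    by_contra h
    have h0 : 0 < conj f j := by omega
    rw [conj_lt_iff hf] at h0
    have := hf.1 (Nat.zero_le 0)
    omega

lemma conj_conj (hf : IsPartition f) : conj (conj f) = f := by
  funext j
  apply eq_of_lt_iff
  intro i
  rw [conj_lt_iff (conj_isPartition hf), conj_lt_iff hf]

lemma durfee_conj (hf : IsPartition f) : durfee (conj f) = durfee f := by
  unfold durfee
  apply Nat.card_congr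
  apply Equiv.subtypeEquivRight
  intro i
  rw [conj_lt_iff hf]

/-! ### Decreasing enumeration of a finset -/

lemma fin_strictMono_le {n : ℕ} (g : Fin n → ℕ) (hg : StrictMono g) :
    ∀ k (hk : k < n) l (hlk : l ≤ k), g ⟨l, by omega⟩ + (k - l) ≤ g ⟨k, hk⟩ := by
  intro k
  induction k with
  | zero => intro hk l hlk; interval_cases l; simp
  | succ k ih =>
    intro hk l hlk
    rcases Nat.eq_or_lt_of_le hlk with h | h
    · subst h; simp
    · have hk' : k < n := by omega
      have h1 := ih hk' l (by omega)
      have h2 : g ⟨k, hk'⟩ < g ⟨k + 1, hk⟩ := hg (by simp [Fin.mk_lt_mk])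
      omega

noncomputable def denum (S : Finset ℕ) (i : ℕ) : ℕ :=
  if h : i < S.card then S.orderEmbOfFin rfl ⟨S.card - 1 - i, by omega⟩ else 0

lemma denum_mem {S : Finset ℕ} {i : ℕ} (h : i < S.card) : denum S i ∈ S := by
  rw [denum, dif_pos h]
  exact Finset.orderEmbOfFin_mem S rfl _

lemma denum_add_anti {S : Finset ℕ} {i j : ℕ} (hij : i ≤ j) (hj : j < S.card) :
    denum S j + j ≤ denum S i + i := by
  have hi : i < S.card := by omega
  simp only [denum, dif_pos hi, dif_pos hj]
  have := fin_strictMono_le (S.orderEmbOfFin rfl) (S.orderEmbOfFin rfl).strictMono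
    (S.card - 1 - i) (by omega) (S.card - 1 - j) (by omega)
  omega

lemma denum_strictAnti {S : Finset ℕ} {i j : ℕ} (hij : i < j) (hj : j < S.card) :
    denum S j < denum S i := by
  have := denum_add_anti (le_of_lt hij) hj
  have hi : i < S.card := by omega
  -- need strictness: use fin_strictMono_le difference ≥ j - i ≥ 1
  omega

lemma denum_ge {S : Finset ℕ} {i : ℕ} (h : i < S.card) : S.card ≤ denum S i + i + 1 := by
  rw [denum, dif_pos h]
  have := fin_strictMono_le (S.orderEmbOfFin rfl) (S.orderEmbOfFin rfl).strictMono
    (S.card - 1 - i) (by omega) 0 (by omega)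
  omega

lemma denum_image (S : Finset ℕ) : (Finset.range S.card).image (denum S) = S := by
  apply Finset.eq_of_subset_of_card_le
  · intro x hx
    obtain ⟨i, hi, rfl⟩ := Finset.mem_image.1 hx
    exact denum_mem (Finset.mem_range.1 hi)
  · rw [Finset.card_image_of_injOn, Finset.card_range]
    intro i hi j hj hij
    rw [Finset.mem_coe, Finset.mem_range] at hi hj
    by_contra hne
    rcases Nat.lt_or_ge i j with h | h
    · have := denum_strictAnti h hj; omega
    · have := denum_strictAnti (by omega : j < i) hi; omega

lemma denum_image_eq (u : ℕ → ℕ) (d : ℕ) (hanti : ∀ {i j}, i < j → j < d → u j < u i)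
    {i : ℕ} (hi : i < d) :
    denum ((Finset.range d).image u) i = u i := by
  set S := (Finset.range d).image u with hS
  have hinj : Set.InjOn u (Finset.range d) := by
    intro a ha b hb hab
    rw [Finset.mem_coe, Finset.mem_range] at ha hb
    by_contra hne
    rcases Nat.lt_or_ge a b with h | h
    · have := hanti h hb; omega
    · have := hanti (by omega : b < a) ha; omega
  have hcard : S.card = d := by
    rw [hS, Finset.card_image_of_injOn hinj, Finset.card_range]
  have hd0 : 0 < d := by omega
  set g : Fin d → ℕ := fun k => u (d - 1 - (k : ℕ)) with hg
  have hgmono : StrictMono g := by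
    intro k l hkl
    apply hanti (i := d - 1 - (l : ℕ)) (j := d - 1 - (k : ℕ))
    · have := k.2; have := l.2; omega
    · have := k.2; omega
  have hgmem : ∀ k : Fin d, g k ∈ S := by
    intro k
    rw [hS]
    apply Finset.mem_image_of_mem
    rw [Finset.mem_range]
    omega
  have huniq := Finset.orderEmbOfFin_unique hcard hgmem hgmono
  have hidx : i < S.card := by omega
  rw [denum, dif_pos hidx]
  have : (S.orderEmbOfFin hcard) ⟨S.card - 1 - i, by omega⟩ =
      (S.orderEmbOfFin rfl) ⟨S.card - 1 - i, by omega⟩ := by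
    rw [Finset.orderEmbOfFin_eq_orderEmbOfFin_iff]
  rw [← this, ← huniq]
  simp only [hg]
  congr 1
  omega

/-! ### The Frobenius map -/

noncomputable def Smap (f : ℕ → ℕ) : Finset ℕ :=
  (Finset.range (durfee f)).image (fun i => f i - (i + 1))

lemma Smap_anti (hf : IsPartition f) :
    ∀ {i j}, i < j → j < durfee f → f j - (j + 1) < f i - (i + 1) := by
  intro i j hij hj
  have h1 : j < f j := (durfee_lt_iff hf).1 hj
  have h2 : i < f i := (durfee_lt_iff hf).1 (by omega)
  have h3 : f j ≤ f i := hf.1 (le_of_lt hij)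
  omega

lemma card_Smap (hf : IsPartition f) : (Smap f).card = durfee f := by
  rw [Smap, Finset.card_image_of_injOn, Finset.card_range]
  intro a ha b hb hab
  have hab : f a - (a + 1) = f b - (b + 1) := hab
  rw [Finset.mem_coe, Finset.mem_range] at ha hb
  by_contra hne
  rcases Nat.lt_or_ge a b with h | h
  · have := Smap_anti hf h hb; omega
  · have := Smap_anti hf (by omega : b < a) ha; omega

lemma denum_Smap (hf : IsPartition f) {i : ℕ} (hi : i < durfee f) :
    denum (Smap f) i = f i - (i + 1) :=
  denum_image_eq _ _ (fun h h' => Smap_anti hf h h') hi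

lemma f_ge_durfee (hf : IsPartition f) {i : ℕ} (hi : i < durfee f) : durfee f ≤ f i := by
  have h1 : durfee f - 1 < f (durfee f - 1) := (durfee_lt_iff hf).1 (by omega)
  have h2 : f (durfee f - 1) ≤ f i := hf.1 (by omega)
  omega

lemma conj_ge_durfee (hf : IsPartition f) {j : ℕ} (hj : j < durfee f) :
    durfee f ≤ conj f j := by
  apply le_of_forall_lt_imp
  intro i hi
  rw [conj_lt_iff hf]
  have : durfee f ≤ f i := f_ge_durfee hf hi
  omega

lemma f_le_durfee (hf : IsPartition f) {i : ℕ} (hi : durfee f ≤ i) : f i ≤ durfee f := by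
  have h1 : ¬ durfee f < f (durfee f) := fun h => by
    have := (durfee_lt_iff hf).2 h; omega
  have h2 : f i ≤ f (durfee f) := hf.1 hi
  omega

lemma psize_eq_sum (N : ℕ) (hN : ∀ i, N ≤ i → f i = 0) :
    psize f = ∑ i ∈ Finset.range N, f i := by
  rw [psize]
  apply tsum_eq_sum
  intro b hb
  exact hN b (by simpa [Finset.mem_range] using hb)

lemma psize_split (hf : IsPartition f) :
    psize f = ∑ i ∈ Finset.range (durfee f), f i
      + ∑ j ∈ Finset.range (durfee f), (conj f j - durfee f) := by
  obtain ⟨N₀, hN₀⟩ := hf.exists_bound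
  set d := durfee f with hd
  set N := max N₀ (max d (conj f 0)) with hN
  have hdN : d ≤ N := by omega
  have hcN : conj f 0 ≤ N := by omega
  rw [psize_eq_sum N (fun i hi => hN₀ i (by omega))]
  have hsplit : ∑ i ∈ Finset.range N, f i
      = ∑ i ∈ Finset.range d, f i + ∑ i ∈ Finset.Ico d N, f i := by
    rw [Finset.range_eq_Ico, Finset.range_eq_Ico]
    exact (Finset.sum_Ico_consecutive f (Nat.zero_le d) hdN).symm
  rw [hsplit]
  congr 1
  -- legs
  calc ∑ i ∈ Finset.Ico d N, f i
      = ∑ i ∈ Finset.Ico d N, ((Finset.range d).filter (fun j => j < f i)).card := by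
        apply Finset.sum_congr rfl
        intro i hi
        rw [Finset.mem_Ico] at hi
        have hfd : f i ≤ d := f_le_durfee hf hi.1
        have : (Finset.range d).filter (fun j => j < f i) = Finset.range (f i) := by
          ext j
          simp only [Finset.mem_filter, Finset.mem_range]
          omega
        rw [this, Finset.card_range]
    _ = ∑ i ∈ Finset.Ico d N, ∑ j ∈ Finset.range d, if j < f i then 1 else 0 := by
        apply Finset.sum_congr rfl
        intro i _
        rw [Finset.card_filter]
    _ = ∑ j ∈ Finset.range d, ∑ i ∈ Finset.Ico d N, if j < f i then 1 else 0 :=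
        Finset.sum_comm
    _ = ∑ j ∈ Finset.range d, (conj f j - d) := by
        apply Finset.sum_congr rfl
        intro j hj
        rw [Finset.mem_range] at hj
        rw [← Finset.card_filter]
        have : (Finset.Ico d N).filter (fun i => j < f i) = Finset.Ico d (conj f j) := by
          ext i
          simp only [Finset.mem_filter, Finset.mem_Ico]
          constructor
          · intro ⟨⟨h1, h2⟩, h3⟩
            exact ⟨h1, (conj_lt_iff hf).2 h3⟩
          · intro ⟨h1, h2⟩
            have h3 : j < f i := (conj_lt_iff hf).1 h2
            have h4 : conj f j ≤ conj f 0 := (conj_isPartition hf).1 (Nat.zero_le j)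
            exact ⟨⟨h1, by omega⟩, h3⟩
        rw [this, Nat.card_Ico]

lemma weight_Smap (hf : IsPartition f) :
    (∑ s ∈ Smap f, (s + 1)) + ∑ t ∈ Smap (conj f), t = psize f := by
  set d := durfee f with hd
  have hd' : durfee (conj f) = d := durfee_conj hf
  have hA : ∑ s ∈ Smap f, (s + 1) = ∑ i ∈ Finset.range d, (f i - (i + 1) + 1) := by
    rw [Smap]
    rw [Finset.sum_image]
    intro a ha b hb hab
    have hab : f a - (a + 1) = f b - (b + 1) := hab
    rw [Finset.mem_coe, Finset.mem_range] at ha hb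
    by_contra hne
    rcases Nat.lt_or_ge a b with h | h
    · have := Smap_anti hf h hb; omega
    · have := Smap_anti hf (by omega : b < a) ha; omega
  have hB : ∑ t ∈ Smap (conj f), t = ∑ j ∈ Finset.range d, (conj f j - (j + 1)) := by
    rw [Smap, hd']
    rw [Finset.sum_image]
    intro a ha b hb hab
    have hab : conj f a - (a + 1) = conj f b - (b + 1) := hab
    rw [Finset.mem_coe, Finset.mem_range] at ha hb
    by_contra hne
    rcases Nat.lt_or_ge a b with h | h
    · have := Smap_anti (conj_isPartition hf) h (by omega); omega
    · have := Smap_anti (conj_isPartition hf) (by omega : b < a) (by omega); omega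
  rw [hA, hB, psize_split hf, ← hd]
  have X1 : ∑ i ∈ Finset.range d, (f i - (i + 1) + 1) + ∑ i ∈ Finset.range d, i
      = ∑ i ∈ Finset.range d, f i := by
    rw [← Finset.sum_add_distrib]
    apply Finset.sum_congr rfl
    intro i hi
    rw [Finset.mem_range] at hi
    have : i < f i := (durfee_lt_iff hf).1 hi
    omega
  have X2 : ∑ j ∈ Finset.range d, (conj f j - (j + 1))
      = ∑ j ∈ Finset.range d, (conj f j - d) + ∑ j ∈ Finset.range d, (d - (j + 1)) := by
    rw [← Finset.sum_add_distrib]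
    apply Finset.sum_congr rfl
    intro j hj
    rw [Finset.mem_range] at hj
    have : d ≤ conj f j := conj_ge_durfee hf hj
    omega
  have X3 : ∑ j ∈ Finset.range d, (d - (j + 1)) = ∑ j ∈ Finset.range d, j := by
    calc ∑ j ∈ Finset.range d, (d - (j + 1)) = ∑ j ∈ Finset.range d, (d - 1 - j) := by
          apply Finset.sum_congr rfl
          intro j hj
          rw [Finset.mem_range] at hj
          omega
      _ = ∑ j ∈ Finset.range d, j := Finset.sum_range_reflect id d
  omega

/-! ### The inverse map -/

noncomputable def gmap (S T : Finset ℕ) : ℕ → ℕ := fun i =>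
  if i < S.card then denum S i + i + 1
  else ((Finset.range T.card).filter (fun j => i < denum T j + j + 1)).card

lemma gmap_head {S T : Finset ℕ} {i : ℕ} (h : i < S.card) :
    gmap S T i = denum S i + i + 1 := if_pos h

lemma gmap_tail {S T : Finset ℕ} {i : ℕ} (h : ¬ i < S.card) :
    gmap S T i = ((Finset.range T.card).filter (fun j => i < denum T j + j + 1)).card :=
  if_neg h

lemma gmap_tail_le {S T : Finset ℕ} {i : ℕ} (h : ¬ i < S.card) :
    gmap S T i ≤ T.card := by
  rw [gmap_tail h]
  calc _ ≤ (Finset.range T.card).card := Finset.card_filter_le _ _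
    _ = T.card := Finset.card_range _

lemma gmap_head_ge {S T : Finset ℕ} {i : ℕ} (h : i < S.card) :
    S.card ≤ gmap S T i := by
  rw [gmap_head h]
  exact denum_ge h

lemma gmap_antitone {S T : Finset ℕ} (hST : S.card = T.card) : Antitone (gmap S T) := by
  intro i j hij
  by_cases hj : j < S.card
  · have hi : i < S.card := by omega
    rw [gmap_head hi, gmap_head hj]
    have := denum_add_anti hij hj
    omega
  · by_cases hi : i < S.card
    · calc gmap S T j ≤ T.card := gmap_tail_le hj
        _ = S.card := hST.symm
        _ ≤ gmap S T i := gmap_head_ge hi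
    · rw [gmap_tail hi, gmap_tail hj]
      apply Finset.card_le_card
      intro k hk
      rw [Finset.mem_filter] at *
      obtain ⟨h1, h2⟩ := hk
      exact ⟨h1, by omega⟩

lemma gmap_isPartition {S T : Finset ℕ} (hST : S.card = T.card) :
    IsPartition (gmap S T) := by
  refine ⟨gmap_antitone hST, eventually_atTop.2 ⟨S.card + T.card + denum T 0 + 1, ?_⟩⟩
  intro i hi
  rw [gmap_tail (by omega)]
  rw [Finset.filter_false_of_mem, Finset.card_empty]
  intro j hj
  rw [Finset.mem_range] at hj
  have h1 := denum_add_anti (Nat.zero_le j) hj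
  omega

lemma gmap_lt_iff {S T : Finset ℕ} (hST : S.card = T.card) (i : ℕ) :
    i < gmap S T i ↔ i < S.card := by
  constructor
  · intro h
    by_contra hc
    have := gmap_tail_le (S := S) (T := T) hc
    omega
  · intro h
    rw [gmap_head h]
    omega

lemma durfee_gmap {S T : Finset ℕ} (hST : S.card = T.card) :
    durfee (gmap S T) = S.card := by
  rw [durfee]
  rw [Nat.card_congr (Equiv.subtypeEquivRight (fun i => gmap_lt_iff hST i))]
  exact natcard_lt S.card

lemma Smap_gmap {S T : Finset ℕ} (hST : S.card = T.card) : Smap (gmap S T) = S := by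
  rw [Smap, durfee_gmap hST]
  rw [show ((fun i => gmap S T i - (i+1))) = fun i => gmap S T i - (i+1) from rfl]
  have : ∀ i ∈ Finset.range S.card, gmap S T i - (i + 1) = denum S i := by
    intro i hi
    rw [Finset.mem_range] at hi
    rw [gmap_head hi]
    omega
  rw [Finset.image_congr (fun i hi => this i (by simpa using hi))]
  exact denum_image S

lemma conj_gmap {S T : Finset ℕ} (hST : S.card = T.card) :
    conj (gmap S T) = gmap T S := by
  have hpart := gmap_isPartition hST
  funext j
  by_cases hj : j < T.card
  · rw [gmap_head (show j < T.card from hj)]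
    apply eq_of_lt_iff
    intro i
    rw [conj_lt_iff hpart]
    by_cases hi : i < S.card
    · rw [gmap_head hi]
      have h1 := denum_ge hi
      have h2 := denum_ge hj
      constructor
      · intro _; omega
      · intro _; omega
    · rw [gmap_tail hi]
      -- j < card filter ↔ i < denum T j + j + 1, using downward closedness
      have hdc : ∀ x ∈ (Finset.range T.card).filter (fun k => i < denum T k + k + 1),
          ∀ y, y ≤ x → y ∈ (Finset.range T.card).filter (fun k => i < denum T k + k + 1) := by
        intro x hx y hy
        rw [Finset.mem_filter, Finset.mem_range] at hx ⊢
        have := denum_add_anti hy hx.1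
        have hx2 : i < denum T x + x + 1 := hx.2
        exact ⟨by omega, by omega⟩
      have hmemiff := (mem_iff_lt_card_of_dc _ hdc j).symm
      rw [hmemiff, Finset.mem_filter, Finset.mem_range]
      constructor
      · intro ⟨_, h⟩; exact h
      · intro h; exact ⟨hj, h⟩
  · rw [gmap_tail (show ¬ j < T.card from hj)]
    have hset : ∀ i, (j < gmap S T i) ↔ (i ∈ (Finset.range S.card).filter
        (fun i => j < denum S i + i + 1)) := by
      intro i
      rw [Finset.mem_filter, Finset.mem_range]
      by_cases hi : i < S.card
      · rw [gmap_head hi]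
        constructor
        · intro h; exact ⟨hi, h⟩
        · intro ⟨_, h⟩; exact h
      · rw [gmap_tail hi]
        have := gmap_tail_le (S := S) (T := T) hi
        constructor
        · intro h
          exfalso
          have h2 := Finset.card_filter_le (Finset.range T.card) (fun k => i < denum T k + k + 1)
          rw [Finset.card_range] at h2
          rw [gmap_tail hi] at *
          omega
        · intro ⟨h, _⟩; omega
    rw [conj]
    rw [Nat.card_congr (Equiv.subtypeEquivRight hset)]
    rw [Nat.card_eq_fintype_card, Fintype.card_coe]

lemma gmap_Smap (hf : IsPartition f) : gmap (Smap f) (Smap (conj f)) = f := by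
  have hcard : (Smap f).card = durfee f := card_Smap hf
  have hcard' : (Smap (conj f)).card = durfee f := by
    rw [card_Smap (conj_isPartition hf), durfee_conj hf]
  funext i
  by_cases hi : i < durfee f
  · rw [gmap_head (by omega)]
    rw [denum_Smap hf hi]
    have : i < f i := (durfee_lt_iff hf).1 hi
    omega
  · rw [gmap_tail (by omega)]
    rw [hcard']
    have hfi : f i ≤ durfee f := f_le_durfee hf (by omega)
    have : (Finset.range (durfee f)).filter
        (fun j => i < denum (Smap (conj f)) j + j + 1) = Finset.range (f i) := by
      ext j
      simp only [Finset.mem_filter, Finset.mem_range]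
      constructor
      · intro ⟨hj, h⟩
        rw [denum_Smap (conj_isPartition hf) (by rwa [durfee_conj hf])] at h
        have hjc : j < conj f j := (durfee_lt_iff (conj_isPartition hf)).1
          (by rwa [durfee_conj hf])
        have : i < conj f j := by omega
        have := (conj_lt_iff hf).1 this
        omega
      · intro hj
        have hjd : j < durfee f := by omega
        refine ⟨hjd, ?_⟩
        rw [denum_Smap (conj_isPartition hf) (by rwa [durfee_conj hf])]
        have hjc : j < conj f j := (durfee_lt_iff (conj_isPartition hf)).1
          (by rwa [durfee_conj hf])
        have : i < conj f j := (conj_lt_iff hf).2 (by omega)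
        omega
    rw [this, Finset.card_range]

/-! ### The equivalence -/

noncomputable def PartEquiv :
    {f : ℕ → ℕ // IsPartition f} ≃ {p : Finset ℕ × Finset ℕ // p.1.card = p.2.card} where
  toFun f := ⟨(Smap f.1, Smap (conj f.1)), by
    rw [card_Smap f.2, card_Smap (conj_isPartition f.2), durfee_conj f.2]⟩
  invFun p := ⟨gmap p.1.1 p.1.2, gmap_isPartition p.2⟩
  left_inv f := Subtype.ext (gmap_Smap f.2)
  right_inv p := by
    obtain ⟨⟨S, T⟩, h⟩ := p
    apply Subtype.ext
    simp only
    rw [conj_gmap h, Smap_gmap h, Smap_gmap h.symm]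

lemma wtP_PartEquiv (f : {f : ℕ → ℕ // IsPartition f}) :
    wtP ((PartEquiv f) : Finset ℕ × Finset ℕ) = psize f.1 := by
  show (∑ s ∈ Smap f.1, (s + 1)) + ∑ t ∈ Smap (conj f.1), t = psize f.1
  exact weight_Smap f.2

instance fiberQ_finite (n : ℕ) :
    Finite {p : {p : Finset ℕ × Finset ℕ // p.1.card = p.2.card} // wtP p.1 = n} := by
  set big := ((Finset.range (n+1)).powerset ×ˢ (Finset.range (n+1)).powerset)
  apply Finite.of_injective (β := {x // x ∈ big})
    (fun p => ⟨p.1.1, by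
      rw [Finset.mem_product, Finset.mem_powerset, Finset.mem_powerset]
      have hw : (∑ k ∈ p.1.1.1, (k+1)) + ∑ k ∈ p.1.1.2, k = n := p.2
      constructor
      · intro k hk
        have : k + 1 ≤ ∑ k ∈ p.1.1.1, (k+1) :=
          Finset.single_le_sum (fun _ _ => Nat.zero_le _) hk
        rw [Finset.mem_range]
        omega
      · intro k hk
        have : k ≤ ∑ k ∈ p.1.1.2, k :=
          Finset.single_le_sum (f := fun k => k) (fun _ _ => Nat.zero_le _) hk
        rw [Finset.mem_range]
        omega⟩)
  intro a b hab
  have : (a.1.1 : Finset ℕ × Finset ℕ) = b.1.1 := by simpa using hab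
  apply Subtype.ext
  apply Subtype.ext
  exact this

lemma tsum_const_finite {β : Type*} [Finite β] (c : ℂ) :
    ∑' _ : β, c = (Nat.card β : ℂ) * c := by
  letI := Fintype.ofFinite β
  rw [tsum_eq_sum (s := Finset.univ) (fun b hb => absurd (Finset.mem_univ b) hb)]
  rw [Finset.sum_const, Finset.card_univ, Nat.card_eq_fintype_card, nsmul_eq_mul]

end aux

open Complex in
/-- The generating function for partitions is the constant term in `z` of
`(-zq; q)_∞ (-1/z; q)_∞`, the constant term being extracted as the average of the
product over the unit circle `z = e^{iθ}`. -/
theorem stmt18 (q : ℂ) (hq : ‖q‖ < 1) :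
    ∑' n : ℕ, (Nat.card {f : ℕ → ℕ // IsPartition f ∧ psize f = n} : ℂ) * q ^ n =
      (1 / (2 * (Real.pi : ℂ))) *
        ∫ θ : ℝ in (0 : ℝ)..(2 * Real.pi),
          (∏' k : ℕ, (1 + Complex.exp (θ * Complex.I) * q ^ (k + 1))) *
          (∏' k : ℕ, (1 + (Complex.exp (θ * Complex.I))⁻¹ * q ^ k)) := by
  rw [analytic_side hq]
  have sQfull : Summable (fun p : Finset ℕ × Finset ℕ => q ^ wtP p) := by
    apply Summable.of_norm
    refine (summable_q_wt hq).congr fun p => ?_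
    rw [norm_pow]
  have sQ : Summable (fun p : {p : Finset ℕ × Finset ℕ // p.1.card = p.2.card} =>
      q ^ wtP (p : Finset ℕ × Finset ℕ)) := sQfull.subtype _
  have sP : Summable (fun f : {f : ℕ → ℕ // IsPartition f} => q ^ psize f.1) := by
    have h := (PartEquiv.summable_iff
      (f := fun p : {p : Finset ℕ × Finset ℕ // p.1.card = p.2.card} =>
        q ^ wtP (p : Finset ℕ × Finset ℕ))).2 sQ
    refine h.congr fun f => ?_
    simp only [Function.comp]
    rw [wtP_PartEquiv]
  have h1 : ∑' p : {p : Finset ℕ × Finset ℕ // p.1.card = p.2.card},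
      q ^ wtP (p : Finset ℕ × Finset ℕ)
      = ∑' f : {f : ℕ → ℕ // IsPartition f}, q ^ psize f.1 := by
    rw [← Equiv.tsum_eq PartEquiv (fun p : {p : Finset ℕ × Finset ℕ // p.1.card = p.2.card} =>
      q ^ wtP (p : Finset ℕ × Finset ℕ))]
    exact tsum_congr fun f => by rw [wtP_PartEquiv]
  have hfin : ∀ n : ℕ, Finite {g : {f : ℕ → ℕ // IsPartition f} // psize g.1 = n} := by
    intro n
    have e := PartEquiv.subtypeEquiv (p := fun g : {f : ℕ → ℕ // IsPartition f} => psize g.1 = n)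
      (q := fun p : {p : Finset ℕ × Finset ℕ // p.1.card = p.2.card} =>
        wtP (p : Finset ℕ × Finset ℕ) = n)
      (fun g => by
        show psize g.1 = n ↔ wtP ((PartEquiv g) : Finset ℕ × Finset ℕ) = n
        rw [wtP_PartEquiv])
    exact Finite.of_equiv _ e.symm
  have h2 : ∑' f : {f : ℕ → ℕ // IsPartition f}, q ^ psize f.1
      = ∑' n : ℕ, (Nat.card {f : ℕ → ℕ // IsPartition f ∧ psize f = n} : ℂ) * q ^ n := by
    rw [← Equiv.tsum_eq (Equiv.sigmaFiberEquiv (fun g : {f : ℕ → ℕ // IsPartition f} => psize g.1))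
      (fun g : {f : ℕ → ℕ // IsPartition f} => q ^ psize g.1)]
    rw [Summable.tsum_sigma]
    · refine tsum_congr fun n => ?_
      have hc : ∀ c : {g : {f : ℕ → ℕ // IsPartition f} // psize g.1 = n},
          q ^ psize ((Equiv.sigmaFiberEquiv
            (fun g : {f : ℕ → ℕ // IsPartition f} => psize g.1)) ⟨n, c⟩ : _).1 = q ^ n := by
        intro c
        simp only [Equiv.sigmaFiberEquiv, Equiv.coe_fn_mk]
        rw [c.2]
      haveI := hfin n
      rw [tsum_congr hc, tsum_const_finite]
      congr 2
      exact Nat.card_congr (Equiv.subtypeSubtypeEquivSubtypeInter IsPartition (fun g => psize g = n))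
    · exact ((Equiv.sigmaFiberEquiv
        (fun g : {f : ℕ → ℕ // IsPartition f} => psize g.1)).summable_iff).2 sP
  rw [h1, h2]
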